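/- Let N ≥ 1 and let z_1, …, z_N be pairwise distinct elements of a field of characteristic zero. Then the sum over all ordered triples (i,j,k) of pairwise distinct indices of z_i^4/((z_i - z_j)(z_i - z_k)) equals (N-2) · ∑_{i<j} (z_i + z_j)^2. -/

import Mathlib

private lemma tri_cyc {α M : Type*} [Fintype α] [AddCommMonoid M] (f : α → α → α → M) :
    ∑ i : α, ∑ j : α, ∑ k : α, f i j k = ∑ i : α, ∑ j : α, ∑ k : α, f k i j := by
  rw [Finset.sum_comm]
  exact Finset.sum_congr rfl fun x _ => Finset.sum_comm

private lemma tri_swap {α M : Type*} [Fintype α] [AddCommMonoid M] (f : α → α → α → M) :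
    ∑ i : α, ∑ j : α, ∑ k : α, f i j k = ∑ i : α, ∑ j : α, ∑ k : α, f i k j :=
  Finset.sum_congr rfl fun _ _ => Finset.sum_comm

private lemma key_id {F : Type*} [Field F] [CharZero F] (x y w : F)
    (hxy : x ≠ y) (hyw : y ≠ w) (hxw : x ≠ w) :
    x^4/((x-y)*(x-w)) + y^4/((y-w)*(y-x)) + w^4/((w-x)*(w-y))
      = (1/2)*((x+y)^2 + (y+w)^2 + (x+w)^2) := by
  have h1 : x - y ≠ 0 := sub_ne_zero.mpr hxy
  have h2 : y - w ≠ 0 := sub_ne_zero.mpr hyw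
  have h3 : x - w ≠ 0 := sub_ne_zero.mpr hxw
  have h4 : y - x ≠ 0 := sub_ne_zero.mpr hxy.symm
  have h5 : w - x ≠ 0 := sub_ne_zero.mpr hxw.symm
  have h6 : w - y ≠ 0 := sub_ne_zero.mpr hyw.symm
  field_simp
  ring

theorem triple_sum_z_fourth {F : Type*} [Field F] [CharZero F] {N : ℕ} (hN : 1 ≤ N)
    (z : Fin N → F) (hz : Function.Injective z) :
    ∑ i : Fin N, ∑ j : Fin N, ∑ k : Fin N,
      (if i ≠ j ∧ j ≠ k ∧ i ≠ k then z i ^ 4 / ((z i - z j) * (z i - z k)) else 0) =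
      ((N : F) - 2) * ∑ i : Fin N, ∑ j : Fin N,
        (if i < j then (z i + z j) ^ 2 else 0) := by
  classical
  set f : Fin N → Fin N → Fin N → F := fun i j k =>
    if i ≠ j ∧ j ≠ k ∧ i ≠ k then z i ^ 4 / ((z i - z j) * (z i - z k)) else 0 with hf
  set g : Fin N → Fin N → Fin N → F := fun i j k =>
    if i ≠ j ∧ j ≠ k ∧ i ≠ k then (z i + z j) ^ 2 else 0 with hg
  set L : F := ∑ i : Fin N, ∑ j : Fin N, ∑ k : Fin N, f i j k with hL
  set T : F := ∑ i : Fin N, ∑ j : Fin N, (if i < j then (z i + z j) ^ 2 else 0) with hT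
  -- Step 1: 3L = sum of cyclic symmetrization
  have e1 : L = ∑ i : Fin N, ∑ j : Fin N, ∑ k : Fin N, f k i j := tri_cyc f
  have e2 : L = ∑ i : Fin N, ∑ j : Fin N, ∑ k : Fin N, f j k i :=
    e1.trans (tri_cyc (fun i j k => f k i j))
  have e3 : ∑ i : Fin N, ∑ j : Fin N, ∑ k : Fin N,
      (f i j k + f j k i + f k i j) = L + L + L := by
    simp only [Finset.sum_add_distrib]
    rw [← hL, ← e2, ← e1]
  -- pointwise identity
  have hpt : ∀ i j k : Fin N, f i j k + f j k i + f k i j =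
      (1/2) * (g i j k + g j k i + g i k j) := by
    intro i j k
    by_cases h : i ≠ j ∧ j ≠ k ∧ i ≠ k
    · obtain ⟨hij, hjk, hik⟩ := h
      have c0 : i ≠ j ∧ j ≠ k ∧ i ≠ k := ⟨hij, hjk, hik⟩
      have c1 : j ≠ k ∧ k ≠ i ∧ j ≠ i := ⟨hjk, hik.symm, hij.symm⟩
      have c2 : k ≠ i ∧ i ≠ j ∧ k ≠ j := ⟨hik.symm, hij, hjk.symm⟩
      have c3 : i ≠ k ∧ k ≠ j ∧ i ≠ j := ⟨hik, hjk.symm, hij⟩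
      simp only [hf, hg, if_pos c0, if_pos c1, if_pos c2, if_pos c3]
      have := key_id (z i) (z j) (z k) (fun e => hij (hz e)) (fun e => hjk (hz e))
        (fun e => hik (hz e))
      linear_combination this
    · have h1 : ¬(j ≠ k ∧ k ≠ i ∧ j ≠ i) := fun hc => h ⟨hc.2.2.symm, hc.1, hc.2.1.symm⟩
      have h2 : ¬(k ≠ i ∧ i ≠ j ∧ k ≠ j) := fun hc => h ⟨hc.2.1, hc.2.2.symm, hc.1.symm⟩
      have h3 : ¬(i ≠ k ∧ k ≠ j ∧ i ≠ j) := fun hc => h ⟨hc.2.2, hc.2.1.symm, hc.1⟩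
      simp only [hf, hg, if_neg h, if_neg h1, if_neg h2, if_neg h3]
      ring
  -- Step 2: the g-cyclic sums all equal the basic one
  have G1 : ∑ i : Fin N, ∑ j : Fin N, ∑ k : Fin N, g j k i
      = ∑ i : Fin N, ∑ j : Fin N, ∑ k : Fin N, g i j k := by
    rw [tri_cyc (fun i j k => g j k i)]
  have G2 : ∑ i : Fin N, ∑ j : Fin N, ∑ k : Fin N, g i k j
      = ∑ i : Fin N, ∑ j : Fin N, ∑ k : Fin N, g i j k := by
    rw [tri_swap (fun i j k => g i k j)]
  -- Step 3: inner k-sum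
  have hinner : ∀ i j : Fin N, ∑ k : Fin N, g i j k
      = ((N : F) - 2) * (if i < j ∨ j < i then (z i + z j) ^ 2 else 0) := by
    intro i j
    by_cases hij : i = j
    · subst hij
      simp [hg]
    · have hij' : i ≠ j := hij
      have h2N : 2 ≤ N := by
        have hnt : Nontrivial (Fin N) := ⟨⟨i, j, hij'⟩⟩
        have := Fintype.one_lt_card (α := Fin N)
        simp at this
        omega
      have step1 : ∑ k : Fin N, g i j k
          = ∑ k : Fin N, (if j ≠ k ∧ i ≠ k then (z i + z j) ^ 2 else 0) := by
        refine Finset.sum_congr rfl fun k _ => ?_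
        simp [hg, hij']
      have hfilt : (Finset.univ.filter fun k : Fin N => j ≠ k ∧ i ≠ k)
          = Finset.univ \ {i, j} := by
        ext k
        simp only [Finset.mem_filter, Finset.mem_univ, true_and, Finset.mem_sdiff,
          Finset.mem_insert, Finset.mem_singleton, not_or]
        constructor
        · rintro ⟨h1, h2⟩; exact ⟨h2.symm, h1.symm⟩
        · rintro ⟨h1, h2⟩; exact ⟨fun e => h2 e.symm, fun e => h1 e.symm⟩
      have hcard : (Finset.univ.filter fun k : Fin N => j ≠ k ∧ i ≠ k).card = N - 2 := by
        rw [hfilt, Finset.card_sdiff_of_subset (Finset.subset_univ _), Finset.card_univ,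
          Fintype.card_fin, Finset.card_insert_of_notMem (by simp [hij']),
          Finset.card_singleton]
      have hlt : i < j ∨ j < i := lt_or_gt_of_ne hij'
      rw [step1, Finset.sum_ite, Finset.sum_const, Finset.sum_const, smul_zero, add_zero,
        hcard, nsmul_eq_mul, if_pos hlt]
      congr 1
      push_cast [Nat.cast_sub h2N]
      ring
  -- Step 4: assemble
  set S : F := ∑ i : Fin N, ∑ j : Fin N, ∑ k : Fin N, g i j k with hS
  have e4 : L + L + L = (1/2) * (S + S + S) := by
    rw [← e3]
    simp only [hpt]
    rw [show (∑ i : Fin N, ∑ j : Fin N, ∑ k : Fin N,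
        (1/2) * (g i j k + g j k i + g i k j))
        = (1/2) * ∑ i : Fin N, ∑ j : Fin N, ∑ k : Fin N,
          (g i j k + g j k i + g i k j) by simp [Finset.mul_sum]]
    congr 1
    simp only [Finset.sum_add_distrib]
    rw [G1, G2, ← hS]
  have hsplit : ∑ i : Fin N, ∑ j : Fin N,
      (if i < j ∨ j < i then (z i + z j) ^ 2 else 0) = T + T := by
    have pt : ∀ i j : Fin N, (if i < j ∨ j < i then (z i + z j) ^ 2 else 0)
        = (if i < j then (z i + z j) ^ 2 else 0) + (if j < i then (z i + z j) ^ 2 else 0) := by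
      intro i j
      rcases lt_trichotomy i j with h | h | h
      · simp [h, asymm h]
      · simp [h]
      · simp [h, asymm h]
    simp only [pt, Finset.sum_add_distrib]
    congr 1
    rw [Finset.sum_comm]
    refine Finset.sum_congr rfl fun i _ => Finset.sum_congr rfl fun j _ => ?_
    rw [add_comm (z j) (z i)]
  have e5 : S = ((N : F) - 2) * (T + T) := by
    rw [hS]
    calc ∑ i : Fin N, ∑ j : Fin N, ∑ k : Fin N, g i j k
        = ∑ i : Fin N, ∑ j : Fin N,
            ((N : F) - 2) * (if i < j ∨ j < i then (z i + z j) ^ 2 else 0) := by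
          exact Finset.sum_congr rfl fun i _ => Finset.sum_congr rfl fun j _ => hinner i j
      _ = ((N : F) - 2) * ∑ i : Fin N, ∑ j : Fin N,
            (if i < j ∨ j < i then (z i + z j) ^ 2 else 0) := by
          simp [Finset.mul_sum]
      _ = ((N : F) - 2) * (T + T) := by rw [hsplit]
  have h3 : (3 : F) ≠ 0 := three_ne_zero
  apply mul_left_cancel₀ h3
  linear_combination e4 + (3/2) * e5
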